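/- Let H be a complex Hilbert space and let (v_n)_{n=1}^∞ be a total sequence in H. Then there exists a sequence (λ_n)_{n=1}^∞ of positive real numbers such that for every x ∈ H, ‖x‖² ≤ Σ_{n=1}^∞ λ_n |⟨v_n, x⟩|², where the sum on the right-hand side is interpreted in the extended nonnegative reals (it may be infinite). -/

import Mathlib

noncomputable section FrameAux

open Submodule TopologicalSpace Finset

variable {H : Type*} [NormedAddCommGroup H] [InnerProductSpace ℂ H] [CompleteSpace H]

local notation "⟪" x ", " y "⟫" => @inner ℂ _ _ x y

/-- span of the tail `v_{M+1}, v_{M+2}, ...` -/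
abbrev tSpan (v : ℕ → H) (M : ℕ) : Submodule ℂ H := Submodule.span ℂ (v '' {n | M + 1 ≤ n})

/-- orthogonal complement of the tail span -/
abbrev Fsub (v : ℕ → H) (M : ℕ) : Submodule ℂ H := (tSpan v M)ᗮ

lemma tSpan_antitone (v : ℕ → H) {M N : ℕ} (h : M ≤ N) : tSpan v N ≤ tSpan v M :=
  Submodule.span_mono (Set.image_mono (fun n hn => show M + 1 ≤ n from le_trans (by omega) hn))

lemma Fsub_mono (v : ℕ → H) {M N : ℕ} (h : M ≤ N) : Fsub v M ≤ Fsub v N :=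
  Submodule.orthogonal_le (tSpan_antitone v h)

lemma mem_Fsub_iff (v : ℕ → H) (M : ℕ) (x : H) :
    x ∈ Fsub v M ↔ ∀ n, M + 1 ≤ n → ⟪v n, x⟫ = 0 := by
  rw [Submodule.mem_orthogonal]
  constructor
  · intro hx n hn
    exact hx (v n) (Submodule.subset_span ⟨n, hn, rfl⟩)
  · intro hx u hu
    induction hu using Submodule.span_induction with
    | mem y hy => obtain ⟨n, hn, rfl⟩ := hy; exact hx n hn
    | zero => simp
    | add a b _ _ ha hb => rw [inner_add_left, ha, hb, add_zero]
    | smul c a _ ha => rw [inner_smul_left, ha, mul_zero]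

lemma Fsub_zero_eq_bot (v : ℕ → H)
    (hv : (Submodule.span ℂ (v '' {k | 1 ≤ k})).topologicalClosure = ⊤) :
    Fsub v 0 = ⊥ := by
  have h0 : tSpan v 0 = Submodule.span ℂ (v '' {k | 1 ≤ k}) := rfl
  have : (tSpan v 0).topologicalClosure = ⊤ := by rw [h0]; exact hv
  exact Submodule.topologicalClosure_eq_top_iff.1 this

/-- the one-step chain decomposition -/
lemma chain_step (v : ℕ → H) (m : ℕ) :
    ∃ d : H, (‖d‖ = 1 ∨ d = 0) ∧ d ∈ Fsub v (m + 1) ∧ d ∈ (Fsub v m)ᗮ ∧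
      Fsub v (m + 1) ≤ Fsub v m ⊔ Submodule.span ℂ {d} := by
  classical
  haveI : HasOrthogonalProjection (Fsub v m) := HasOrthogonalProjection.ofCompleteSpace _
  by_cases hle : Fsub v (m + 1) ≤ Fsub v m
  · refine ⟨0, Or.inr rfl, zero_mem _, zero_mem _, ?_⟩
    intro u hu; exact Submodule.mem_sup_left (hle hu)
  · obtain ⟨u, hu, hunot⟩ := SetLike.not_le_iff_exists.1 hle
    set p : H := (orthogonalProjection (Fsub v m) u : H) with hp
    have hpmem : p ∈ Fsub v m := by rw [hp]; exact SetLike.coe_mem _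
    set d₀ : H := u - p with hd₀
    have hd₀F : d₀ ∈ Fsub v (m + 1) :=
      Submodule.sub_mem _ hu (Fsub_mono v (Nat.le_succ m) hpmem)
    have hd₀O : d₀ ∈ (Fsub v m)ᗮ := (Fsub v m).sub_starProjection_mem_orthogonal u
    have hd₀ne : d₀ ≠ 0 := by
      intro h0
      apply hunot
      have : u = p := by rwa [sub_eq_zero] at h0
      rw [this]; exact hpmem
    set d : H := (‖d₀‖⁻¹ : ℂ) • d₀ with hd
    have hdnorm : ‖d‖ = 1 := by
      rw [hd, norm_smul]
      simp only [norm_inv, Complex.norm_real, Real.norm_eq_abs, abs_of_nonneg (norm_nonneg d₀)]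
      exact inv_mul_cancel₀ (norm_ne_zero_iff.2 hd₀ne)
    have hdF : d ∈ Fsub v (m + 1) := Submodule.smul_mem _ _ hd₀F
    have hdO : d ∈ (Fsub v m)ᗮ := Submodule.smul_mem _ _ hd₀O
    have hdne : d ≠ 0 := by
      intro h; rw [h, norm_zero] at hdnorm; norm_num at hdnorm
    -- the inner ℂ product with v (m+1) does not vanish
    have hadne : ⟪v (m + 1), d⟫ ≠ 0 := by
      intro ha
      have hdFm : d ∈ Fsub v m := by
        rw [mem_Fsub_iff]
        intro n hn
        rcases Nat.lt_or_ge n (m + 2) with h1 | h1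
        · have : n = m + 1 := by omega
          rw [this]; exact ha
        · exact (mem_Fsub_iff v (m + 1) d).1 hdF n h1
      have : ⟪d, d⟫ = 0 := (Submodule.mem_orthogonal _ _).1 hdO d hdFm
      exact hdne (inner_self_eq_zero.1 this)
    refine ⟨d, Or.inl hdnorm, hdF, hdO, ?_⟩
    intro u' hu'
    set q : H := u' - (orthogonalProjection (Fsub v m) u' : H) with hq
    have hqF : q ∈ Fsub v (m + 1) :=
      Submodule.sub_mem _ hu' (Fsub_mono v (Nat.le_succ m) (SetLike.coe_mem _))
    have hqO : q ∈ (Fsub v m)ᗮ := (Fsub v m).sub_starProjection_mem_orthogonal u'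
    set r : H := q - (⟪v (m + 1), q⟫ / ⟪v (m + 1), d⟫) • d with hr
    have hrF : r ∈ Fsub v (m + 1) := Submodule.sub_mem _ hqF (Submodule.smul_mem _ _ hdF)
    have hra : ⟪v (m + 1), r⟫ = 0 := by
      rw [hr, inner_sub_right, inner_smul_right, div_mul_cancel₀ _ hadne, sub_self]
    have hrFm : r ∈ Fsub v m := by
      rw [mem_Fsub_iff]
      intro n hn
      rcases Nat.lt_or_ge n (m + 2) with h1 | h1
      · have : n = m + 1 := by omega
        rw [this]; exact hra
      · exact (mem_Fsub_iff v (m + 1) r).1 hrF n h1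
    have hrO : r ∈ (Fsub v m)ᗮ := Submodule.sub_mem _ hqO (Submodule.smul_mem _ _ hdO)
    have hr0 : r = 0 := by
      have : ⟪r, r⟫ = 0 := (Submodule.mem_orthogonal _ _).1 hrO r hrFm
      exact inner_self_eq_zero.1 this
    have hqd : q = (⟪v (m + 1), q⟫ / ⟪v (m + 1), d⟫) • d := by
      have := sub_eq_zero.1 hr0; exact this
    have : u' = (orthogonalProjection (Fsub v m) u' : H) + q := by rw [hq]; abel
    rw [this]
    refine Submodule.add_mem _ (Submodule.mem_sup_left (SetLike.coe_mem _)) ?_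
    rw [hqd]
    exact Submodule.mem_sup_right (Submodule.smul_mem _ _ (Submodule.mem_span_singleton_self d))


/-- chain vectors -/
def delta (v : ℕ → H) (m : ℕ) : H := (chain_step v m).choose

lemma delta_norm (v : ℕ → H) (m : ℕ) : ‖delta v m‖ = 1 ∨ delta v m = 0 :=
  (chain_step v m).choose_spec.1

lemma delta_memF (v : ℕ → H) (m : ℕ) : delta v m ∈ Fsub v (m + 1) :=
  (chain_step v m).choose_spec.2.1

lemma delta_memO (v : ℕ → H) (m : ℕ) : delta v m ∈ (Fsub v m)ᗮ :=
  (chain_step v m).choose_spec.2.2.1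

lemma Fsub_le_chain (v : ℕ → H) (m : ℕ) :
    Fsub v (m + 1) ≤ Fsub v m ⊔ Submodule.span ℂ {delta v m} :=
  (chain_step v m).choose_spec.2.2.2

lemma delta_inner_eq_zero (v : ℕ → H) {i j : ℕ} (hij : i ≠ j) :
    ⟪delta v i, delta v j⟫ = 0 := by
  rcases Nat.lt_or_ge i j with h | h
  · exact (Submodule.mem_orthogonal _ _).1 (delta_memO v j) _
      (Fsub_mono v (by omega) (delta_memF v i))
  · have h' : j < i := by omega
    have := (Submodule.mem_orthogonal _ _).1 (delta_memO v i) _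
      (Fsub_mono v (by omega) (delta_memF v j))
    rw [← inner_conj_symm, this, map_zero]

lemma Fsub_le_span_delta (v : ℕ → H)
    (hv : (Submodule.span ℂ (v '' {k | 1 ≤ k})).topologicalClosure = ⊤) (m : ℕ) :
    Fsub v m ≤ Submodule.span ℂ (delta v '' {i | i < m}) := by
  induction m with
  | zero => rw [Fsub_zero_eq_bot v hv]; exact bot_le
  | succ m ih =>
      refine le_trans (Fsub_le_chain v m) (sup_le ?_ ?_)
      · exact le_trans ih (Submodule.span_mono
          (Set.image_mono (fun i hi => by simp only [Set.mem_setOf_eq] at *; omega)))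
      · refine Submodule.span_le.2 ?_
        intro y hy
        rcases hy with rfl
        exact Submodule.subset_span ⟨m, by simp, rfl⟩

/-- finite linear combinations from the tail approximate elements of `(tail span)ᗮᗮ`. -/
lemma exists_combo (v : ℕ → H) (P : ℕ) {y : H} (hy : y ∈ ((tSpan v P)ᗮᗮ : Submodule ℂ H))
    {ε : ℝ} (hε : 0 < ε) :
    ∃ (k : ℕ) (c : Fin k → ℂ) (ι : Fin k → ℕ), (∀ i, P + 1 ≤ ι i) ∧
      ‖(∑ i, c i • v (ι i)) - y‖ ≤ ε := by
  classical
  have hy' : y ∈ closure (tSpan v P : Set H) := by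
    rw [Submodule.orthogonal_orthogonal_eq_closure] at hy
    rwa [← Submodule.topologicalClosure_coe]
  obtain ⟨g, hg, hdist⟩ := Metric.mem_closure_iff.1 hy' ε hε
  obtain ⟨k, f, gf, hsum⟩ := mem_span_set'.1 hg
  have hchoice : ∀ i : Fin k, ∃ n : ℕ, P + 1 ≤ n ∧ v n = (gf i : H) := by
    intro i
    obtain ⟨n, hn, hvn⟩ := (gf i).2
    exact ⟨n, hn, hvn⟩
  choose ι hι hvι using hchoice
  refine ⟨k, f, ι, hι, ?_⟩
  have : (∑ i, f i • v (ι i)) = g := by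
    rw [← hsum]
    exact Finset.sum_congr rfl (fun i _ => by rw [hvι i])
  rw [this, ← dist_eq_norm, dist_comm]
  exact le_of_lt hdist


lemma le_of_sq_le' {a b : ℝ} (ha : 0 ≤ a) (hb : 0 ≤ b) (h : a ^ 2 ≤ b ^ 2) : a ≤ b := by
  nlinarith

end FrameAux


set_option maxHeartbeats 2000000

/-- If `(v n)_{n ≥ 1}` is a total sequence in a complex Hilbert space `H`, then there are
positive scalars `(λ n)_{n ≥ 1}` such that the scaled sequence `(√λ_n v n)` satisfies
the lower frame inequality `‖x‖² ≤ ∑ n, λ n * |⟪v n, x⟫|²`, the right-hand side being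
a sum in the extended nonnegative reals (possibly infinite). -/
theorem total_sequence_exists_lower_frame_bound
    {H : Type*} [NormedAddCommGroup H] [InnerProductSpace ℂ H] [CompleteSpace H]
    (v : ℕ → H)
    (hv : (Submodule.span ℂ (v '' {k | 1 ≤ k})).topologicalClosure = ⊤) :
    ∃ lam : ℕ → ℝ,
      (∀ n, 1 ≤ n → 0 < lam n) ∧
      ∀ x : H,
        ENNReal.ofReal (‖x‖ ^ 2) ≤
          ∑' n : ℕ, ENNReal.ofReal (lam (n + 1) * ‖(inner ℂ (v (n + 1)) x : ℂ)‖ ^ 2) := by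
  classical
  -- separability and a dense sequence
  have hsepH : TopologicalSpace.SeparableSpace H := by
    have hcount : (v '' {k | 1 ≤ k}).Countable := (Set.to_countable _).image v
    have hsp : TopologicalSpace.IsSeparable
        ((Submodule.span ℂ (v '' {k | 1 ≤ k}) : Submodule ℂ H) : Set H) :=
      hcount.isSeparable.span
    have hcl := hsp.closure
    have hU : closure ((Submodule.span ℂ (v '' {k | 1 ≤ k}) : Submodule ℂ H) : Set H)
        = Set.univ := by
      rw [← Submodule.topologicalClosure_coe, hv]; rfl
    rw [hU] at hcl
    exact TopologicalSpace.isSeparable_univ_iff.1 hcl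
  obtain ⟨hseq, hdense⟩ := TopologicalSpace.exists_dense_seq H
  -- F certificates
  have certF : ∀ m : ℕ, ∃ (k : ℕ) (c : Fin k → ℂ) (ι : Fin k → ℕ),
      (∀ i, m + 1 ≤ ι i) ∧
      ‖(∑ i, c i • v (ι i)) - (10 : ℂ) • delta v m‖ ≤ (1/2 : ℝ) ^ (m + 1) := by
    intro m
    exact exists_combo v m (Submodule.smul_mem _ _ (delta_memO v m)) (by positivity)
  choose kF cF iF hiF hgF using certF
  -- T certificates
  have certT : ∀ r j : ℕ, ∃ (k : ℕ) (c : Fin k → ℂ) (ι : Fin k → ℕ),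
      (∀ i, r + j + 2 ≤ ι i) ∧
      ((∃ (k' : ℕ) (c' : Fin k' → ℂ) (ι' : Fin k' → ℕ), (∀ i, r + j + 2 ≤ ι' i) ∧
          ‖(∑ i, c' i • v (ι' i)) - (10 : ℂ) • hseq r‖ ≤ 20 * (1/2 : ℝ) ^ j) →
        ‖(∑ i, c i • v (ι i)) - (10 : ℂ) • hseq r‖ ≤ 20 * (1/2 : ℝ) ^ j) := by
    intro r j
    by_cases hex : ∃ (k' : ℕ) (c' : Fin k' → ℂ) (ι' : Fin k' → ℕ), (∀ i, r + j + 2 ≤ ι' i) ∧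
        ‖(∑ i, c' i • v (ι' i)) - (10 : ℂ) • hseq r‖ ≤ 20 * (1/2 : ℝ) ^ j
    · obtain ⟨k', c', ι', h1, h2⟩ := hex
      exact ⟨k', c', ι', h1, fun _ => h2⟩
    · exact ⟨0, finZeroElim, finZeroElim, fun i => i.elim0, fun hc => absurd hc hex⟩
  choose kT cT iT hiT hgT using certT
  -- the weights
  set lam : ℕ → ℝ := fun n =>
    1 + (∑ m ∈ Finset.range n, ∑ i ∈ Finset.univ.filter (fun i => iF m i = n),
          100 * 4 ^ (m + 1) * (kF m : ℝ) ^ 2 * ‖cF m i‖ ^ 2)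
      + (∑ p ∈ Finset.range n ×ˢ Finset.range n,
          ∑ i ∈ Finset.univ.filter (fun i => iT p.1 p.2 i = n),
          100 * (kT p.1 p.2 : ℝ) ^ 2 * ‖cT p.1 p.2 i‖ ^ 2) with hlam
  have hsum1nonneg : ∀ n, 0 ≤ (∑ m ∈ Finset.range n, ∑ i ∈ Finset.univ.filter (fun i => iF m i = n),
          100 * 4 ^ (m + 1) * (kF m : ℝ) ^ 2 * ‖cF m i‖ ^ 2) := by
    intro n
    refine Finset.sum_nonneg fun m _ => Finset.sum_nonneg fun i _ => by positivity
  have hsum2nonneg : ∀ n, 0 ≤ (∑ p ∈ Finset.range n ×ˢ Finset.range n,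
          ∑ i ∈ Finset.univ.filter (fun i => iT p.1 p.2 i = n),
          100 * (kT p.1 p.2 : ℝ) ^ 2 * ‖cT p.1 p.2 i‖ ^ 2) := by
    intro n
    refine Finset.sum_nonneg fun p _ => Finset.sum_nonneg fun i _ => by positivity
  have lam_pos : ∀ n, 0 < lam n := by
    intro n
    have h1 := hsum1nonneg n
    have h2 := hsum2nonneg n
    rw [hlam]; dsimp only; linarith
  -- demand bounds
  have lam_geF : ∀ m i, 100 * 4 ^ (m + 1) * (kF m : ℝ) ^ 2 * ‖cF m i‖ ^ 2 ≤ lam (iF m i) := by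
    intro m i
    set n := iF m i with hn
    have hmn : m ∈ Finset.range n := Finset.mem_range.2 (by have := hiF m i; omega)
    have hterm : 100 * 4 ^ (m + 1) * (kF m : ℝ) ^ 2 * ‖cF m i‖ ^ 2 ≤
        ∑ i' ∈ Finset.univ.filter (fun i' => iF m i' = n), 100 * 4 ^ (m + 1) * (kF m : ℝ) ^ 2 * ‖cF m i'‖ ^ 2 := by
      refine Finset.single_le_sum
        (f := fun i' => 100 * 4 ^ (m + 1) * (kF m : ℝ) ^ 2 * ‖cF m i'‖ ^ 2)
        (fun i' _ => by positivity) ?_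
      simp [hn]
    have hterm2 : (∑ i' ∈ Finset.univ.filter (fun i' => iF m i' = n),
          100 * 4 ^ (m + 1) * (kF m : ℝ) ^ 2 * ‖cF m i'‖ ^ 2) ≤
        ∑ m' ∈ Finset.range n, ∑ i' ∈ Finset.univ.filter (fun i' => iF m' i' = n),
          100 * 4 ^ (m' + 1) * (kF m' : ℝ) ^ 2 * ‖cF m' i'‖ ^ 2 := by
      refine Finset.single_le_sum
        (f := fun m' => ∑ i' ∈ Finset.univ.filter (fun i' => iF m' i' = n),
          100 * 4 ^ (m' + 1) * (kF m' : ℝ) ^ 2 * ‖cF m' i'‖ ^ 2)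
        (fun m' _ => Finset.sum_nonneg fun i' _ => by positivity) hmn
    have h2 := hsum2nonneg n
    rw [hlam]; dsimp only; linarith
  have lam_geT : ∀ r j i, 100 * (kT r j : ℝ) ^ 2 * ‖cT r j i‖ ^ 2 ≤ lam (iT r j i) := by
    intro r j i
    set n := iT r j i with hn
    have hrj : (r, j) ∈ Finset.range n ×ˢ Finset.range n := by
      have := hiT r j i
      refine Finset.mem_product.2 ⟨Finset.mem_range.2 ?_, Finset.mem_range.2 ?_⟩ <;> omega
    have hterm : 100 * (kT r j : ℝ) ^ 2 * ‖cT r j i‖ ^ 2 ≤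
        ∑ i' ∈ Finset.univ.filter (fun i' => iT r j i' = n), 100 * (kT r j : ℝ) ^ 2 * ‖cT r j i'‖ ^ 2 := by
      refine Finset.single_le_sum
        (f := fun i' => 100 * (kT r j : ℝ) ^ 2 * ‖cT r j i'‖ ^ 2)
        (fun i' _ => by positivity) ?_
      simp [hn]
    have hterm2 : (∑ i' ∈ Finset.univ.filter (fun i' => iT r j i' = n),
          100 * (kT r j : ℝ) ^ 2 * ‖cT r j i'‖ ^ 2) ≤
        ∑ p ∈ Finset.range n ×ˢ Finset.range n,
          ∑ i' ∈ Finset.univ.filter (fun i' => iT p.1 p.2 i' = n),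
          100 * (kT p.1 p.2 : ℝ) ^ 2 * ‖cT p.1 p.2 i'‖ ^ 2 := by
      exact Finset.single_le_sum
        (f := fun p : ℕ × ℕ => ∑ i' ∈ Finset.univ.filter (fun i' => iT p.1 p.2 i' = n),
          100 * (kT p.1 p.2 : ℝ) ^ 2 * ‖cT p.1 p.2 i'‖ ^ 2)
        (fun p _ => Finset.sum_nonneg fun i' _ => by positivity) hrj
    have h1 := hsum1nonneg n
    rw [hlam]; dsimp only; linarith
  refine ⟨lam, fun n _ => lam_pos n, ?_⟩
  set Phi : H → ENNReal := fun z =>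
    ∑' n : ℕ, ENNReal.ofReal (lam (n + 1) * ‖(inner ℂ (v (n + 1)) z : ℂ)‖ ^ 2) with hPhi
  -- the basic Bessel-type budget bound coming from the demands built into lam
  have hbudget : ∀ (z : H), Phi z ≠ ⊤ → ∀ (k : ℕ) (c : Fin k → ℂ) (ι : Fin k → ℕ) (B : ℝ),
      0 < B → (∀ i, 1 ≤ ι i) → (∀ i, B * (k : ℝ) ^ 2 * ‖c i‖ ^ 2 ≤ lam (ι i)) →
      ‖(inner ℂ (∑ i, c i • v (ι i)) z : ℂ)‖ ^ 2 ≤ (Phi z).toReal / B := by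
    intro z htop k c ι B hB h1 hdem
    have hPhinn : (0:ℝ) ≤ (Phi z).toReal := ENNReal.toReal_nonneg
    have hterm : ∀ n, 1 ≤ n → lam n * ‖(inner ℂ (v n) z : ℂ)‖ ^ 2 ≤ (Phi z).toReal := by
      intro n hn
      have h1' : ENNReal.ofReal (lam ((n-1) + 1) * ‖(inner ℂ (v ((n-1) + 1)) z : ℂ)‖ ^ 2) ≤ Phi z := by
        rw [hPhi]; exact ENNReal.le_tsum (n - 1)
      have h2' : n - 1 + 1 = n := by omega
      rw [h2'] at h1'
      have h3' := ENNReal.toReal_mono htop h1'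
      rwa [ENNReal.toReal_ofReal (by positivity)] at h3'
    rcases Nat.eq_zero_or_pos k with hk | hk
    · subst hk
      simp only [Finset.univ_eq_empty, Finset.sum_empty, inner_zero_left, norm_zero]
      rw [zero_pow (by norm_num)]
      exact div_nonneg hPhinn (le_of_lt hB)
    · have hk' : (0 : ℝ) < (k : ℝ) := by exact_mod_cast hk
      have hinner : (inner ℂ (∑ i, c i • v (ι i)) z : ℂ)
          = ∑ i, (starRingEnd ℂ) (c i) * (inner ℂ (v (ι i)) z : ℂ) := by
        rw [sum_inner]
        exact Finset.sum_congr rfl fun i _ => inner_smul_left _ _ _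
      have hn1 : ‖(inner ℂ (∑ i, c i • v (ι i)) z : ℂ)‖
          ≤ ∑ i, ‖c i‖ * ‖(inner ℂ (v (ι i)) z : ℂ)‖ := by
        rw [hinner]
        refine le_trans (norm_sum_le _ _) (le_of_eq (Finset.sum_congr rfl fun i _ => ?_))
        rw [norm_mul, RCLike.norm_conj]
      set f : Fin k → ℝ := fun i => ‖c i‖ / Real.sqrt (lam (ι i)) with hf
      set g : Fin k → ℝ := fun i => Real.sqrt (lam (ι i)) * ‖(inner ℂ (v (ι i)) z : ℂ)‖ with hg
      have hfg : ∀ i, ‖c i‖ * ‖(inner ℂ (v (ι i)) z : ℂ)‖ = f i * g i := by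
        intro i
        rw [hf, hg]
        dsimp only
        have hsne : Real.sqrt (lam (ι i)) ≠ 0 := ne_of_gt (Real.sqrt_pos.2 (lam_pos _))
        field_simp
      have hCS : (∑ i, f i * g i) ^ 2 ≤ (∑ i, f i ^ 2) * (∑ i, g i ^ 2) :=
        Finset.sum_mul_sq_le_sq_mul_sq _ f g
      have hf2 : (∑ i, f i ^ 2) ≤ 1 / (B * k) := by
        have hi : ∀ i ∈ Finset.univ, f i ^ 2 ≤ 1 / (B * (k:ℝ)^2) := by
          intro i _
          rw [hf]
          dsimp only
          rw [div_pow, Real.sq_sqrt (le_of_lt (lam_pos _)), div_le_div_iff₀ (lam_pos _) (by positivity)]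
          calc ‖c i‖^2 * (B * (k:ℝ)^2) = B * (k:ℝ)^2 * ‖c i‖^2 := by ring
            _ ≤ lam (ι i) := hdem i
            _ = 1 * lam (ι i) := (one_mul _).symm
        calc (∑ i, f i ^ 2) ≤ (Finset.univ : Finset (Fin k)).card • (1 / (B * (k:ℝ)^2)) :=
            Finset.sum_le_card_nsmul _ _ _ hi
          _ = (k:ℝ) * (1 / (B * (k:ℝ)^2)) := by
              rw [Finset.card_univ, Fintype.card_fin, nsmul_eq_mul]
          _ = 1 / (B * k) := by field_simp
      have hg2 : (∑ i, g i ^ 2) ≤ (k : ℝ) * (Phi z).toReal := by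
        have hi : ∀ i ∈ Finset.univ, g i ^ 2 ≤ (Phi z).toReal := by
          intro i _
          rw [hg]
          dsimp only
          rw [mul_pow, Real.sq_sqrt (le_of_lt (lam_pos _))]
          exact hterm (ι i) (h1 i)
        calc (∑ i, g i ^ 2) ≤ (Finset.univ : Finset (Fin k)).card • (Phi z).toReal :=
            Finset.sum_le_card_nsmul _ _ _ hi
          _ = (k:ℝ) * (Phi z).toReal := by rw [Finset.card_univ, Fintype.card_fin, nsmul_eq_mul]
      have hgsum : (0:ℝ) ≤ ∑ i, g i ^ 2 := Finset.sum_nonneg fun i _ => sq_nonneg _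
      calc ‖(inner ℂ (∑ i, c i • v (ι i)) z : ℂ)‖ ^ 2 ≤ (∑ i, f i * g i) ^ 2 := by
            refine pow_le_pow_left₀ (norm_nonneg _) ?_ 2
            exact hn1.trans (le_of_eq (Finset.sum_congr rfl fun i _ => hfg i))
        _ ≤ (∑ i, f i ^ 2) * (∑ i, g i ^ 2) := hCS
        _ ≤ (1 / (B * k)) * ((k:ℝ) * (Phi z).toReal) :=
            mul_le_mul hf2 hg2 hgsum (by positivity)
        _ = (Phi z).toReal / B := by field_simp
  -- main inequality for unit vectors
  have main : ∀ z : H, ‖z‖ = 1 → ENNReal.ofReal 1 ≤ Phi z := by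
    intro z hzn
    by_cases htop : Phi z = ⊤
    · rw [htop]; exact le_top
    set s : ℝ := Real.sqrt ((Phi z).toReal) with hs
    have hs0 : (0:ℝ) ≤ s := Real.sqrt_nonneg _
    have hsq : s ^ 2 = (Phi z).toReal := Real.sq_sqrt ENNReal.toReal_nonneg
    have hsqb : ∀ (y : ℂ) (B : ℝ), 0 < B → ‖y‖^2 ≤ (Phi z).toReal / B^2 → ‖y‖ ≤ s / B := by
      intro y B hB h
      refine le_of_sq_le' (norm_nonneg _) (by positivity) ?_
      rw [div_pow, hsq]; exact h
    have habs : ∀ (g t : H) (a b : ℝ), ‖(inner ℂ g z : ℂ)‖ ≤ a → ‖g - (10:ℂ) • t‖ ≤ b →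
        (10:ℝ) * ‖(inner ℂ t z : ℂ)‖ ≤ a + b := by
      intro g t a b hga hgb
      have h2 : ‖(inner ℂ ((10:ℂ) • t) z : ℂ)‖ = 10 * ‖(inner ℂ t z : ℂ)‖ := by
        rw [inner_smul_left, norm_mul, RCLike.norm_conj]
        norm_num
      have h1 : (inner ℂ ((10:ℂ) • t) z : ℂ)
          = (inner ℂ g z : ℂ) - (inner ℂ (g - (10:ℂ) • t) z : ℂ) := by
        rw [inner_sub_left]; ring
      have h3 : ‖(inner ℂ (g - (10:ℂ) • t) z : ℂ)‖ ≤ b := by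
        refine le_trans (norm_inner_le_norm _ _) ?_
        rw [hzn, mul_one]; exact hgb
      calc (10:ℝ) * ‖(inner ℂ t z : ℂ)‖ = ‖(inner ℂ ((10:ℂ)•t) z : ℂ)‖ := h2.symm
        _ ≤ ‖(inner ℂ g z : ℂ)‖ + ‖(inner ℂ (g - (10:ℂ)•t) z : ℂ)‖ := by
            rw [h1]; exact norm_sub_le _ _
        _ ≤ a + b := add_le_add hga h3
    -- the delta estimates
    have hdeltaEst : ∀ m : ℕ, ‖(inner ℂ (delta v m) z : ℂ)‖ ≤ (1/2:ℝ)^(m+1) * ((s + 10)/100) := by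
      intro m
      have hb : ‖(inner ℂ (∑ i, cF m i • v (iF m i)) z : ℂ)‖^2
          ≤ (Phi z).toReal / (100 * 4^(m+1)) :=
        hbudget z htop (kF m) (cF m) (iF m) (100*4^(m+1)) (by positivity)
          (fun i => le_trans (by omega) (hiF m i)) (fun i => lam_geF m i)
      have hBsq : (100:ℝ) * 4^(m+1) = (10 * 2^(m+1))^2 := by
        rw [mul_pow, pow_right_comm]
        norm_num
      have hb' : ‖(inner ℂ (∑ i, cF m i • v (iF m i)) z : ℂ)‖ ≤ s / (10 * 2^(m+1)) := by
        refine hsqb _ (10 * 2^(m+1)) (by positivity) ?_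
        rw [← hBsq]; exact hb
      have h10 := habs (∑ i, cF m i • v (iF m i)) (delta v m) _ _ hb' (hgF m)
      set t : ℝ := (1/2:ℝ)^(m+1) with ht
      have ht0 : (0:ℝ) < t := by rw [ht]; positivity
      have harr : s / (10 * 2^(m+1)) = t * (s/10) := by
        rw [ht, one_div, inv_pow]
        field_simp
      rw [harr] at h10
      nlinarith [h10]
    -- decomposition of z
    set U : Submodule ℂ H := ⨆ m, Fsub v m with hU
    set K : Submodule ℂ H := Uᗮ with hK
    haveI hKc : CompleteSpace K := by rw [hK]; infer_instance
    haveI : Submodule.HasOrthogonalProjection K := Submodule.HasOrthogonalProjection.ofCompleteSpace K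
    set w : H := (Submodule.orthogonalProjection K z : H) with hw
    have hwK : w ∈ K := by rw [hw]; exact SetLike.coe_mem _
    set z1 : H := z - w with hz1
    have hz1K : z1 ∈ Kᗮ := by rw [hz1, hw]; exact K.sub_starProjection_mem_orthogonal z
    have hz1n : ‖z1‖ ≤ 1 := by
      have horth0 : (inner ℂ z1 w : ℂ) = 0 := by
        have h0 := (Submodule.mem_orthogonal K z1).1 hz1K w hwK
        rw [← inner_conj_symm, h0, map_zero]
      have hsum : z1 + w = z := by rw [hz1]; abel
      have hnn := norm_add_sq (𝕜 := ℂ) z1 w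
      rw [hsum, hzn] at hnn
      have hre : RCLike.re (inner ℂ z1 w : ℂ) = 0 := by rw [horth0]; simp
      refine le_of_sq_le' (norm_nonneg _) zero_le_one ?_
      rw [hre] at hnn
      nlinarith [sq_nonneg ‖w‖, hnn]
    -- T-part estimate
    have hT : ∀ ε : ℝ, 0 < ε → ‖(inner ℂ w z : ℂ)‖ ≤ s/100 + ε := by
      intro ε hε
      obtain ⟨j, hj⟩ := exists_pow_lt_of_lt_one (show (0:ℝ) < ε/3 by linarith)
        (show (1/2:ℝ) < 1 by norm_num)
      have hpj : (0:ℝ) < (1/2:ℝ)^j := by positivity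
      obtain ⟨r, hr⟩ := hdense.exists_dist_lt w hpj
      have hwtail : ((10:ℂ) • w) ∈ ((tSpan v (r+j+1))ᗮᗮ : Submodule ℂ H) := by
        refine Submodule.smul_mem _ _ ?_
        have hKle : K ≤ (Fsub v (r+j+1))ᗮ := by
          rw [hK]; exact Submodule.orthogonal_le (le_iSup (fun m => Fsub v m) (r+j+1))
        exact hKle hwK
      obtain ⟨k0, c0, ι0, hι0, hg0⟩ := exists_combo v (r+j+1) hwtail hpj
      have h10w : ‖(10:ℂ) • w - (10:ℂ) • hseq r‖ ≤ 10 * (1/2:ℝ)^j := by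
        rw [← smul_sub, norm_smul]
        have h1 : ‖(10:ℂ)‖ = 10 := by norm_num
        rw [h1]
        have h2 : ‖w - hseq r‖ < (1/2:ℝ)^j := by rw [← dist_eq_norm]; exact hr
        nlinarith [h2]
      have hex : ∃ (k' : ℕ) (c' : Fin k' → ℂ) (ι' : Fin k' → ℕ), (∀ i, r + j + 2 ≤ ι' i) ∧
          ‖(∑ i, c' i • v (ι' i)) - (10:ℂ) • hseq r‖ ≤ 20 * (1/2:ℝ)^j := by
        refine ⟨k0, c0, ι0, fun i => by have := hι0 i; omega, ?_⟩
        have htri := dist_triangle (∑ i, c0 i • v (ι0 i)) ((10:ℂ) • w) ((10:ℂ) • hseq r)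
        rw [dist_eq_norm, dist_eq_norm, dist_eq_norm] at htri
        have := le_trans htri (add_le_add hg0 h10w)
        linarith [hpj]
      have hgood := hgT r j hex
      have hbT : ‖(inner ℂ (∑ i, cT r j i • v (iT r j i)) z : ℂ)‖^2 ≤ (Phi z).toReal / 100 :=
        hbudget z htop _ _ _ 100 (by norm_num)
          (fun i => by have := hiT r j i; omega) (fun i => lam_geT r j i)
      have hbT' : ‖(inner ℂ (∑ i, cT r j i • v (iT r j i)) z : ℂ)‖ ≤ s/10 := by
        refine hsqb _ 10 (by norm_num) ?_
        norm_num only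
        exact hbT
      have h3 : ‖(∑ i, cT r j i • v (iT r j i)) - (10:ℂ) • w‖ ≤ 30 * (1/2:ℝ)^j := by
        have htri := dist_triangle (∑ i, cT r j i • v (iT r j i)) ((10:ℂ) • hseq r) ((10:ℂ) • w)
        rw [dist_eq_norm, dist_eq_norm, dist_eq_norm] at htri
        have h4 : ‖(10:ℂ) • hseq r - (10:ℂ) • w‖ ≤ 10 * (1/2:ℝ)^j := by
          rw [norm_sub_rev]; exact h10w
        have := le_trans htri (add_le_add hgood h4)
        linarith
      have hchain := habs (∑ i, cT r j i • v (iT r j i)) w _ _ hbT' h3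
      have hεj : 3 * (1/2:ℝ)^j ≤ ε := by linarith [hj]
      linarith [hchain]
    -- F-part estimate
    have hF : ∀ ε : ℝ, 0 < ε → ‖(inner ℂ z1 z : ℂ)‖ ≤ (1+ε) * ((s+10)/100) + ε := by
      intro ε hε
      have hz1cl' : (z1 : H) ∈ closure (U : Set H) := by
        rw [← Submodule.topologicalClosure_coe, ← Submodule.orthogonal_orthogonal_eq_closure]
        exact hz1K
      obtain ⟨zz, hzzU, hzzd⟩ := Metric.mem_closure_iff.1 hz1cl' ε hε
      have hzzU' : zz ∈ U := hzzU
      have hmono : Monotone (fun m => Fsub v m) := fun a b hab => Fsub_mono v hab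
      obtain ⟨m0, hm0⟩ := (Submodule.mem_iSup_of_directed _ hmono.directed_le).1 (by rw [hU] at hzzU'; exact hzzU')
      have hzzspan : zz ∈ Submodule.span ℂ (delta v '' {i | i < m0}) :=
        Fsub_le_span_delta v hv m0 hm0
      set vv : H := ∑ i ∈ Finset.range m0, (inner ℂ (delta v i) z : ℂ) • delta v i with hvv
      have hzz_inner : ∀ y ∈ Submodule.span ℂ (delta v '' {i | i < m0}),
          (inner ℂ y (z - vv) : ℂ) = 0 := by
        intro y hy
        induction hy using Submodule.span_induction with
        | mem y0 hy0 =>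
            obtain ⟨i, hi, rfl⟩ := hy0
            rcases delta_norm v i with hni | h0
            · have hvvi : (inner ℂ (delta v i) vv : ℂ) = (inner ℂ (delta v i) z : ℂ) := by
                rw [hvv, inner_sum]
                rw [Finset.sum_eq_single i]
                · rw [inner_smul_right, inner_self_eq_norm_sq_to_K, hni]
                  norm_num
                · intro b _ hbi
                  rw [inner_smul_right, delta_inner_eq_zero v (Ne.symm hbi), mul_zero]
                · intro hnotin
                  exact absurd (Finset.mem_range.2 hi) hnotin
              rw [inner_sub_right, hvvi, sub_self]
            · rw [h0, inner_zero_left]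
        | zero => rw [inner_zero_left]
        | add a b _ _ ha hb => rw [inner_add_left, ha, hb, add_zero]
        | smul c a _ ha => rw [inner_smul_left, ha, mul_zero]
      have hzzz : (inner ℂ zz z : ℂ) = (inner ℂ zz vv : ℂ) := by
        have h0 := hzz_inner zz hzzspan
        rw [inner_sub_right] at h0
        exact sub_eq_zero.1 h0
      have hgeom : (∑ i ∈ Finset.range m0, (1/2:ℝ)^(i+1)) ≤ 1 := by
        have hid : ∀ n : ℕ, (∑ i ∈ Finset.range n, (1/2:ℝ)^(i+1)) = 1 - (1/2:ℝ)^n := by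
          intro n
          induction n with
          | zero => simp
          | succ n ih => rw [Finset.sum_range_succ, ih]; ring
        rw [hid m0]
        have : (0:ℝ) ≤ (1/2:ℝ)^m0 := by positivity
        linarith
      have hvvn : ‖vv‖ ≤ (s+10)/100 := by
        calc ‖vv‖ ≤ ∑ i ∈ Finset.range m0, ‖(inner ℂ (delta v i) z : ℂ) • delta v i‖ :=
            norm_sum_le _ _
          _ ≤ ∑ i ∈ Finset.range m0, (1/2:ℝ)^(i+1) * ((s+10)/100) := by
              refine Finset.sum_le_sum fun i _ => ?_
              rw [norm_smul]
              rcases delta_norm v i with h1 | h1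
              · rw [h1, mul_one]; exact hdeltaEst i
              · rw [h1, norm_zero, mul_zero]; positivity
          _ = (∑ i ∈ Finset.range m0, (1/2:ℝ)^(i+1)) * ((s+10)/100) := by
              rw [← Finset.sum_mul]
          _ ≤ 1 * ((s+10)/100) := by
              refine mul_le_mul_of_nonneg_right hgeom (by positivity)
          _ = (s+10)/100 := one_mul _
      have hzznorm : ‖zz‖ ≤ 1 + ε := by
        have h1 : ‖zz‖ ≤ ‖z1‖ + ‖zz - z1‖ := by
          calc ‖zz‖ = ‖z1 + (zz - z1)‖ := by congr 1; abel
            _ ≤ ‖z1‖ + ‖zz - z1‖ := norm_add_le _ _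
        have h2 : ‖zz - z1‖ ≤ ε := by
          rw [← dist_eq_norm, dist_comm]
          exact le_of_lt hzzd
        linarith [hz1n]
      calc ‖(inner ℂ z1 z : ℂ)‖ ≤ ‖(inner ℂ zz z : ℂ)‖ + ‖(inner ℂ (z1 - zz) z : ℂ)‖ := by
            have h0 : (inner ℂ zz z : ℂ) + (inner ℂ (z1 - zz) z : ℂ) = (inner ℂ z1 z : ℂ) := by
              rw [← inner_add_left]
              congr 1
              abel
            rw [← h0]; exact norm_add_le _ _
        _ ≤ ‖zz‖ * ‖vv‖ + ‖z1 - zz‖ * ‖z‖ := by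
            refine add_le_add ?_ (norm_inner_le_norm _ _)
            rw [hzzz]; exact norm_inner_le_norm _ _
        _ ≤ (1+ε) * ((s+10)/100) + ε := by
            rw [hzn, mul_one]
            refine add_le_add (mul_le_mul hzznorm hvvn (norm_nonneg _) (by linarith)) ?_
            rw [← dist_eq_norm]
            exact le_of_lt hzzd
    -- combine
    have hcon : ∀ ε : ℝ, 0 < ε → (1:ℝ) ≤ ((s+10)/100 + s/100) + ε * ((s+10)/100 + 2) := by
      intro ε hε
      have h2 : RCLike.re (inner ℂ z z : ℂ) = ‖z‖^2 := inner_self_eq_norm_sq z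
      have h3 : (inner ℂ z z : ℂ) = (inner ℂ z1 z : ℂ) + (inner ℂ w z : ℂ) := by
        have h0 : z1 + w = z := by rw [hz1]; abel
        have h1 : (inner ℂ (z1 + w) z : ℂ) = (inner ℂ z1 z : ℂ) + (inner ℂ w z : ℂ) :=
          inner_add_left _ _ _
        rw [h0] at h1
        exact h1
      have h4 : RCLike.re (inner ℂ z z : ℂ) ≤ ‖(inner ℂ z1 z : ℂ)‖ + ‖(inner ℂ w z : ℂ)‖ := by
        rw [h3]
        exact le_trans (RCLike.re_le_norm _) (norm_add_le _ _)
      have h5 := hF ε hε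
      have h6 := hT ε hε
      rw [h2, hzn] at h4
      nlinarith [h4, h5, h6]
    have h7 : (1:ℝ) ≤ (s+10)/100 + s/100 := by
      refine le_of_forall_pos_le_add fun η hη => ?_
      have hD : (0:ℝ) < (s+10)/100 + 2 := by positivity
      have h8 := hcon (η / ((s+10)/100 + 2)) (by positivity)
      calc (1:ℝ) ≤ ((s+10)/100 + s/100) + (η / ((s+10)/100 + 2)) * ((s+10)/100 + 2) := h8
        _ = ((s+10)/100 + s/100) + η := by
            rw [div_mul_cancel₀ _ (ne_of_gt hD)]
    have hfin : (1:ℝ) ≤ (Phi z).toReal := by nlinarith [hsq]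
    calc ENNReal.ofReal 1 ≤ ENNReal.ofReal ((Phi z).toReal) := ENNReal.ofReal_le_ofReal hfin
      _ = Phi z := ENNReal.ofReal_toReal htop
  -- scaling to general x
  intro x
  rcases eq_or_ne x 0 with rfl | hx0
  · simp
  · have hxn : ‖x‖ ≠ 0 := norm_ne_zero_iff.2 hx0
    set z : H := ((‖x‖ : ℂ))⁻¹ • x with hz
    have hnc : ‖((‖x‖ : ℝ) : ℂ)‖ = ‖x‖ := by
      rw [Complex.norm_real, Real.norm_eq_abs, abs_of_nonneg (norm_nonneg x)]
    have hzn : ‖z‖ = 1 := by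
      rw [hz, norm_smul, norm_inv, hnc]
      exact inv_mul_cancel₀ hxn
    have hmain := main z hzn
    have hxz : ∀ n : ℕ, (inner ℂ (v n) x : ℂ) = ((‖x‖ : ℝ) : ℂ) * (inner ℂ (v n) z : ℂ) := by
      intro n
      rw [hz, inner_smul_right, ← mul_assoc, mul_inv_cancel₀ (by exact_mod_cast hxn), one_mul]
    have hscale : ∀ n : ℕ, ENNReal.ofReal (lam (n+1) * ‖(inner ℂ (v (n+1)) x : ℂ)‖ ^ 2)
        = ENNReal.ofReal (‖x‖^2) * ENNReal.ofReal (lam (n+1) * ‖(inner ℂ (v (n+1)) z : ℂ)‖ ^ 2) := by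
      intro n
      rw [hxz (n+1), norm_mul, mul_pow, hnc, ← ENNReal.ofReal_mul (by positivity)]
      congr 1
      ring
    calc ENNReal.ofReal (‖x‖^2) = ENNReal.ofReal (‖x‖^2) * ENNReal.ofReal 1 := by
          rw [ENNReal.ofReal_one, mul_one]
      _ ≤ ENNReal.ofReal (‖x‖^2) * Phi z := mul_le_mul_right hmain _
      _ = ∑' n : ℕ, ENNReal.ofReal (lam (n+1) * ‖(inner ℂ (v (n+1)) x : ℂ)‖ ^ 2) := by
          rw [hPhi]
          dsimp only
          rw [← ENNReal.tsum_mul_left]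
          exact tsum_congr fun n => (hscale n).symm
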